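/- Let μ ∈ ℂ∖ℝ. Then there is C > 0 such that for all h > 0 and all ξ ∈ Ω_h: |(E^tr_0(ξ)−μ)⁻¹| ≤ C(1+|ξ|²)⁻¹ and |(E^hex_−(ξ)−μ)⁻¹| ≤ C(1+|ξ|²)⁻¹. -/

import Mathlib

open MeasureTheory Complex Filter Topology Matrix
open scoped FourierTransform RealInnerProductSpace ComplexConjugate

noncomputable section

abbrev R2 : Type := EuclideanSpace ℝ (Fin 2)

def v2 (a b : ℝ) : R2 := WithLp.toLp 2 ![a, b]

def he1 : R2 := v2 (1/2) (Real.sqrt 3 / 2)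
def he2 : R2 := v2 (1/2) (-(Real.sqrt 3) / 2)
def he3 : R2 := v2 (-1) 0
def hf1 : R2 := v2 (3/2) (Real.sqrt 3 / 2)
def hf2 : R2 := v2 (3/2) (-(Real.sqrt 3) / 2)
def hf1' : R2 := v2 (1/3) (Real.sqrt 3 / 3)
def hf2' : R2 := v2 (1/3) (-(Real.sqrt 3) / 3)

/-- `φ_f(ξ) = exp(2πi h f·ξ)`. -/
def phase (h : ℝ) (f ξ : R2) : ℂ :=
  Complex.exp (2 * Real.pi * Complex.I * (h : ℂ) * ((⟪f, ξ⟫ : ℝ) : ℂ))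

/-- `α(ξ) = 1 + φ_{f₁}(ξ) + φ_{f₂}(ξ)`. -/
def alphaHex (h : ℝ) (ξ : R2) : ℂ := 1 + phase h hf1 ξ + phase h hf2 ξ

/-- `E^hex_−(ξ) = h⁻²(3 − |α(ξ)|)`. -/
def EhexM (h : ℝ) (ξ : R2) : ℝ := (3 - ‖alphaHex h ξ‖) / h ^ 2

/-- `E^tr_0(ξ) = h⁻²(6 − 2∑_{j=1}^3 cos(2πh e_j·ξ))`. -/
def Etr (h : ℝ) (ξ : R2) : ℝ :=
  (6 - 2 * (Real.cos (2 * Real.pi * h * ⟪he1, ξ⟫) + Real.cos (2 * Real.pi * h * ⟪he2, ξ⟫) +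
    Real.cos (2 * Real.pi * h * ⟪he3, ξ⟫))) / h ^ 2

/-- The dual lattice `Γ'_h = ℤ(h⁻¹f₁') + ℤ(h⁻¹f₂')`. -/
def GammaDual (h : ℝ) : Set R2 :=
  {v | ∃ n₁ n₂ : ℤ, v = h⁻¹ • ((n₁ : ℝ) • hf1' + (n₂ : ℝ) • hf2')}

/-- The first Brillouin zone `Ω_h`. -/
def Omegah (h : ℝ) : Set R2 := {ξ | ∀ f' ∈ GammaDual h, f' ≠ 0 → ‖ξ‖ ≤ ‖ξ - f'‖}

/-! ### Auxiliary lemmas -/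

lemma sin_sq_ge {t : ℝ} (ht : |t| ≤ 2/3) : t^2 ≤ Real.sin (Real.pi * t)^2 := by
  have key : ∀ s : ℝ, 0 ≤ s → s ≤ 2/3 → s ≤ Real.sin (Real.pi * s) := by
    intro s h0 h1
    have hπ := Real.pi_pos
    have hπ3 : Real.pi > 3 := Real.pi_gt_three
    rcases le_or_gt s (1/2) with hc | hc
    · have h2 := Real.mul_le_sin (x := Real.pi * s) (by positivity) (by nlinarith)
      have h3 : 2 / Real.pi * (Real.pi * s) = 2 * s := by field_simp
      rw [h3] at h2; linarith
    · have h2 := Real.mul_le_sin (x := Real.pi * (1 - s)) (by nlinarith) (by nlinarith)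
      have h3 : 2 / Real.pi * (Real.pi * (1-s)) = 2 * (1-s) := by field_simp
      rw [h3] at h2
      rw [show Real.pi * (1 - s) = Real.pi - Real.pi * s by ring, Real.sin_pi_sub] at h2
      linarith
  rcases le_or_gt 0 t with h0 | h0
  · have := key t h0 (by rwa [_root_.abs_of_nonneg h0] at ht)
    nlinarith
  · have h1 : |t| = -t := abs_of_neg h0
    have := key (-t) (by linarith) (by rw [h1] at ht; linarith)
    rw [show Real.pi * (-t) = -(Real.pi * t) by ring, Real.sin_neg] at this
    nlinarith

lemma cos2 (a : ℝ) : Real.cos (2*a) = 1 - 2 * Real.sin a ^ 2 := by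
  rw [Real.cos_two_mul]; nlinarith [Real.sin_sq_add_cos_sq a]

lemma inner_R2 (v w : R2) : ⟪v, w⟫ = v 0 * w 0 + v 1 * w 1 := by
  simp [PiLp.inner_apply, Fin.sum_univ_two, RCLike.inner_apply]; ring

lemma norm_sq_R2 (w : R2) : ‖w‖^2 = w 0 ^2 + w 1 ^2 := by
  rw [← real_inner_self_eq_norm_sq, inner_R2]; ring

lemma latt0 (h : ℝ) (n₁ n₂ : ℝ) :
    (h⁻¹ • (n₁ • hf1' + n₂ • hf2') : R2) 0 = h⁻¹ * ((n₁+n₂)/3) := by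
  simp only [hf1', hf2', v2, PiLp.toLp_apply, PiLp.smul_apply, PiLp.add_apply, smul_eq_mul,
    Matrix.cons_val_zero]; ring

lemma latt1 (h : ℝ) (n₁ n₂ : ℝ) :
    (h⁻¹ • (n₁ • hf1' + n₂ • hf2') : R2) 1 = h⁻¹ * ((n₁-n₂) * Real.sqrt 3/3) := by
  simp only [hf1', hf2', v2, PiLp.toLp_apply, PiLp.smul_apply, PiLp.add_apply, smul_eq_mul,
    Matrix.cons_val_one, Matrix.head_cons, Matrix.cons_val_zero]; ring

lemma latt_ne {h : ℝ} (hh : 0 < h) {n₁ n₂ : ℤ} (hne : ¬(n₁ = 0 ∧ n₂ = 0)) :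
    (h⁻¹ • ((n₁ : ℝ) • hf1' + (n₂ : ℝ) • hf2') : R2) ≠ 0 := by
  have hs3 : (0:ℝ) < Real.sqrt 3 := Real.sqrt_pos.2 (by norm_num)
  have hinv : h⁻¹ ≠ 0 := inv_ne_zero hh.ne'
  intro h0
  rcases eq_or_ne n₁ n₂ with he | he
  · have h1 : (h⁻¹ • ((n₁ : ℝ) • hf1' + (n₂ : ℝ) • hf2') : R2) 0 = 0 := by rw [h0]; rfl
    rw [latt0] at h1
    have h2 : ((n₁:ℝ) + n₂)/3 = 0 := by
      rcases mul_eq_zero.1 h1 with h' | h'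
      · exact absurd h' hinv
      · exact h'
    have h3 : (n₁:ℝ) + n₂ = 0 := by linarith
    have hn : n₁ + n₂ = 0 := by exact_mod_cast h3
    apply hne; constructor <;> omega
  · have h1 : (h⁻¹ • ((n₁ : ℝ) • hf1' + (n₂ : ℝ) • hf2') : R2) 1 = 0 := by rw [h0]; rfl
    rw [latt1] at h1
    rcases mul_eq_zero.1 h1 with h' | h'
    · exact hinv h'
    · have h2 : (n₁:ℝ) - n₂ = 0 := by
        rcases mul_eq_zero.1 (div_eq_zero_iff.1 h' |>.resolve_right (by norm_num)) with h'' | h''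
        · exact h''
        · exact absurd h'' hs3.ne'
      have h3 : n₁ = n₂ := by exact_mod_cast sub_eq_zero.1 h2
      exact he h3

lemma bz {h : ℝ} (hh : 0 < h) {ξ : R2} (hξ : ξ ∈ Omegah h) (n₁ n₂ : ℤ)
    (hne : ¬(n₁ = 0 ∧ n₂ = 0)) :
    2*(((n₁:ℝ)+n₂) * (h * ξ 0) + ((n₁:ℝ)-n₂) * Real.sqrt 3 * (h * ξ 1))
      ≤ (4/3)*((n₁:ℝ)^2 - n₁*n₂ + (n₂:ℝ)^2) := by
  have hr3 : Real.sqrt 3 ^ 2 = 3 := Real.sq_sqrt (by norm_num)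
  set f : R2 := h⁻¹ • ((n₁ : ℝ) • hf1' + (n₂ : ℝ) • hf2') with hf
  have hle := hξ f ⟨n₁, n₂, rfl⟩ (latt_ne hh hne)
  have h2 : ‖ξ‖^2 ≤ ‖ξ - f‖^2 := by nlinarith [norm_nonneg ξ, norm_nonneg (ξ - f)]
  rw [norm_sub_sq_real] at h2
  have h3 : 2*⟪ξ, f⟫ ≤ ‖f‖^2 := by linarith
  rw [norm_sq_R2, inner_R2, hf, latt0, latt1] at h3
  have h4 := mul_le_mul_of_nonneg_left h3 (by positivity : (0:ℝ) ≤ 3*h^2)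
  have E1 : 3*h^2 * (2*(ξ 0 * (h⁻¹ * (((n₁:ℝ)+n₂)/3)) + ξ 1 * (h⁻¹ * (((n₁:ℝ)-n₂)*Real.sqrt 3/3))))
      = 2*(((n₁:ℝ)+n₂) * (h * ξ 0) + ((n₁:ℝ)-n₂) * Real.sqrt 3 * (h * ξ 1)) := by
    field_simp
  have E2 : 3*h^2 * ((h⁻¹ * (((n₁:ℝ)+n₂)/3))^2 + (h⁻¹ * (((n₁:ℝ)-n₂)*Real.sqrt 3/3))^2)
      = (4/3)*((n₁:ℝ)^2 - n₁*n₂ + (n₂:ℝ)^2) := by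
    field_simp
    linear_combination (((n₁:ℝ)-n₂)^2) * hr3
  linarith [E1 ▸ E2 ▸ h4]

lemma phase_eq (h : ℝ) (f ξ : R2) :
    phase h f ξ = Complex.exp (((2 * Real.pi * h * ⟪f, ξ⟫ : ℝ) : ℂ) * Complex.I) := by
  unfold phase; congr 1; push_cast; ring

lemma phase_re (h : ℝ) (f ξ : R2) : (phase h f ξ).re = Real.cos (2 * Real.pi * h * ⟪f, ξ⟫) := by
  rw [phase_eq, Complex.exp_ofReal_mul_I_re]

lemma phase_im (h : ℝ) (f ξ : R2) : (phase h f ξ).im = Real.sin (2 * Real.pi * h * ⟪f, ξ⟫) := by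
  rw [phase_eq, Complex.exp_ofReal_mul_I_im]

lemma phase_abs (h : ℝ) (f ξ : R2) : ‖phase h f ξ‖ = 1 := by
  rw [phase_eq]; exact Complex.norm_exp_ofReal_mul_I _

lemma resolvent_bound (μ : ℂ) (hμ : μ.im ≠ 0) :
    ∃ C > (0:ℝ), ∀ E r : ℝ, 0 ≤ r → r ≤ E →
      ‖((E:ℂ) - μ)⁻¹‖ ≤ C * (1 + r)⁻¹ := by
  have him : 0 < |μ.im| := abs_pos.2 hμ
  have hμ0 : 0 ≤ ‖μ‖ := norm_nonneg _
  refine ⟨(2 + 2*‖μ‖)/|μ.im| + 4, by positivity, fun E r hr hrE => ?_⟩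
  set A := (2 + 2*‖μ‖)/|μ.im| with hA
  have hA0 : 0 ≤ A := by positivity
  have hAe : A * |μ.im| = 2 + 2*‖μ‖ := div_mul_cancel₀ _ him.ne'
  have habs : |μ.im| ≤ ‖(E:ℂ) - μ‖ := by
    have h1 := Complex.abs_im_le_norm ((E:ℂ) - μ)
    simpa using h1
  have hzpos : 0 < ‖(E:ℂ) - μ‖ := lt_of_lt_of_le him habs
  have key : 1 + r ≤ (A + 4) * ‖(E:ℂ) - μ‖ := by
    rcases le_or_gt r (1 + 2*‖μ‖) with hc | hc
    · nlinarith [mul_le_mul_of_nonneg_left habs hA0]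
    · have hsub : ‖(E:ℂ)‖ - ‖μ‖ ≤ ‖(E:ℂ) - μ‖ := by
        simpa using norm_sub_norm_le (E:ℂ) μ
      have hEabs : ‖(E:ℂ)‖ = E := by
        simp [_root_.abs_of_nonneg (le_trans hr hrE)]
      rw [hEabs] at hsub
      nlinarith [mul_le_mul_of_nonneg_left habs hA0]
  have h1r : (0:ℝ) < 1 + r := by linarith
  rw [norm_inv, inv_le_comm₀ hzpos (by positivity), mul_inv, inv_inv,
    inv_mul_le_iff₀ (by positivity)]
  exact key

lemma etr_ge {h : ℝ} (hh : 0 < h) {ξ : R2} (hξ : ξ ∈ Omegah h) : ‖ξ‖^2 ≤ Etr h ξ := by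
  have hr3 : Real.sqrt 3 ^ 2 = 3 := Real.sq_sqrt (by norm_num)
  have b1 := bz hh hξ 1 0 (by simp)
  have b2 := bz hh hξ (-1) 0 (by simp)
  have b3 := bz hh hξ 0 1 (by simp)
  have b4 := bz hh hξ 0 (-1) (by simp)
  have b5 := bz hh hξ 1 1 (by simp)
  have b6 := bz hh hξ (-1) (-1) (by simp)
  push_cast at b1 b2 b3 b4 b5 b6
  norm_num at b1 b2 b3 b4 b5 b6
  have q1 : ((h * ξ 0 + Real.sqrt 3 * (h * ξ 1))/2)^2
      ≤ Real.sin (Real.pi * ((h * ξ 0 + Real.sqrt 3 * (h * ξ 1))/2))^2 :=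
    sin_sq_ge (abs_le.2 ⟨by linarith, by linarith⟩)
  have q2 : ((h * ξ 0 - Real.sqrt 3 * (h * ξ 1))/2)^2
      ≤ Real.sin (Real.pi * ((h * ξ 0 - Real.sqrt 3 * (h * ξ 1))/2))^2 :=
    sin_sq_ge (abs_le.2 ⟨by linarith, by linarith⟩)
  have q3 : (-(h * ξ 0))^2 ≤ Real.sin (Real.pi * (-(h * ξ 0)))^2 :=
    sin_sq_ge (abs_le.2 ⟨by linarith, by linarith⟩)
  have c1 : Real.cos (2 * Real.pi * h * ⟪he1, ξ⟫)
      = 1 - 2 * Real.sin (Real.pi * ((h * ξ 0 + Real.sqrt 3 * (h * ξ 1))/2))^2 := by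
    rw [show 2 * Real.pi * h * ⟪he1, ξ⟫
        = 2 * (Real.pi * ((h * ξ 0 + Real.sqrt 3 * (h * ξ 1))/2)) by
      rw [inner_R2]
      simp only [he1, v2, PiLp.toLp_apply, Matrix.cons_val_zero, Matrix.cons_val_one, Matrix.head_cons]
      ring]
    exact cos2 _
  have c2 : Real.cos (2 * Real.pi * h * ⟪he2, ξ⟫)
      = 1 - 2 * Real.sin (Real.pi * ((h * ξ 0 - Real.sqrt 3 * (h * ξ 1))/2))^2 := by
    rw [show 2 * Real.pi * h * ⟪he2, ξ⟫
        = 2 * (Real.pi * ((h * ξ 0 - Real.sqrt 3 * (h * ξ 1))/2)) by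
      rw [inner_R2]
      simp only [he2, v2, PiLp.toLp_apply, Matrix.cons_val_zero, Matrix.cons_val_one, Matrix.head_cons]
      ring]
    exact cos2 _
  have c3 : Real.cos (2 * Real.pi * h * ⟪he3, ξ⟫)
      = 1 - 2 * Real.sin (Real.pi * (-(h * ξ 0)))^2 := by
    rw [show 2 * Real.pi * h * ⟪he3, ξ⟫ = 2 * (Real.pi * (-(h * ξ 0))) by
      rw [inner_R2]
      simp only [he3, v2, PiLp.toLp_apply, Matrix.cons_val_zero, Matrix.cons_val_one, Matrix.head_cons]
      ring]
    exact cos2 _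
  rw [Etr, norm_sq_R2, le_div_iff₀ (by positivity), c1, c2, c3]
  nlinarith [q1, q2, q3, hr3, sq_nonneg (h * ξ 0), sq_nonneg (h * ξ 1),
    sq_nonneg (Real.sqrt 3 * (h * ξ 1))]

set_option maxHeartbeats 1000000 in
lemma ehex_ge {h : ℝ} (hh : 0 < h) {ξ : R2} (hξ : ξ ∈ Omegah h) : ‖ξ‖^2 ≤ EhexM h ξ := by
  have hr3 : Real.sqrt 3 ^ 2 = 3 := Real.sq_sqrt (by norm_num)
  have b1 := bz hh hξ 1 0 (by simp)
  have b2 := bz hh hξ (-1) 0 (by simp)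
  have b3 := bz hh hξ 0 1 (by simp)
  have b4 := bz hh hξ 0 (-1) (by simp)
  have b5 := bz hh hξ 1 1 (by simp)
  have b6 := bz hh hξ (-1) (-1) (by simp)
  push_cast at b1 b2 b3 b4 b5 b6
  norm_num at b1 b2 b3 b4 b5 b6
  set θ1 := 2 * Real.pi * h * ⟪hf1, ξ⟫ with hθ1
  set θ2 := 2 * Real.pi * h * ⟪hf2, ξ⟫ with hθ2
  set A := ‖alphaHex h ξ‖ with hA
  have hA0 : 0 ≤ A := norm_nonneg _
  have hA3 : A ≤ 3 := by
    rw [hA, alphaHex]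
    have t1 := norm_add_le (1 + phase h hf1 ξ) (phase h hf2 ξ)
    have t2 := norm_add_le 1 (phase h hf1 ξ)
    rw [phase_abs] at t1 t2
    rw [norm_one] at t2
    linarith
  have hre : (alphaHex h ξ).re = 1 + Real.cos θ1 + Real.cos θ2 := by
    simp [alphaHex, phase_re, hθ1, hθ2]
  have him : (alphaHex h ξ).im = Real.sin θ1 + Real.sin θ2 := by
    simp [alphaHex, phase_im, hθ1, hθ2]
  have hAsq : A^2 = 3 + 2*Real.cos θ1 + 2*Real.cos θ2 + 2*Real.cos (θ1 - θ2) := by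
    rw [hA, Complex.sq_norm, Complex.normSq_apply, hre, him]
    linear_combination (Real.sin_sq_add_cos_sq θ1) + (Real.sin_sq_add_cos_sq θ2)
      - 2*(Real.cos_sub θ1 θ2)
  have q1 : ((3*(h * ξ 0) + Real.sqrt 3 * (h * ξ 1))/2)^2
      ≤ Real.sin (Real.pi * ((3*(h * ξ 0) + Real.sqrt 3 * (h * ξ 1))/2))^2 :=
    sin_sq_ge (abs_le.2 ⟨by linarith, by linarith⟩)
  have q2 : ((3*(h * ξ 0) - Real.sqrt 3 * (h * ξ 1))/2)^2
      ≤ Real.sin (Real.pi * ((3*(h * ξ 0) - Real.sqrt 3 * (h * ξ 1))/2))^2 :=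
    sin_sq_ge (abs_le.2 ⟨by linarith, by linarith⟩)
  have q3 : (Real.sqrt 3 * (h * ξ 1))^2
      ≤ Real.sin (Real.pi * (Real.sqrt 3 * (h * ξ 1)))^2 :=
    sin_sq_ge (abs_le.2 ⟨by linarith, by linarith⟩)
  have c1 : Real.cos θ1
      = 1 - 2 * Real.sin (Real.pi * ((3*(h * ξ 0) + Real.sqrt 3 * (h * ξ 1))/2))^2 := by
    rw [show θ1 = 2 * (Real.pi * ((3*(h * ξ 0) + Real.sqrt 3 * (h * ξ 1))/2)) by
      rw [hθ1, inner_R2]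
      simp only [hf1, v2, PiLp.toLp_apply, Matrix.cons_val_zero, Matrix.cons_val_one, Matrix.head_cons]
      ring]
    exact cos2 _
  have c2 : Real.cos θ2
      = 1 - 2 * Real.sin (Real.pi * ((3*(h * ξ 0) - Real.sqrt 3 * (h * ξ 1))/2))^2 := by
    rw [show θ2 = 2 * (Real.pi * ((3*(h * ξ 0) - Real.sqrt 3 * (h * ξ 1))/2)) by
      rw [hθ2, inner_R2]
      simp only [hf2, v2, PiLp.toLp_apply, Matrix.cons_val_zero, Matrix.cons_val_one, Matrix.head_cons]
      ring]
    exact cos2 _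
  have c3 : Real.cos (θ1 - θ2)
      = 1 - 2 * Real.sin (Real.pi * (Real.sqrt 3 * (h * ξ 1)))^2 := by
    rw [show θ1 - θ2 = 2 * (Real.pi * (Real.sqrt 3 * (h * ξ 1))) by
      rw [hθ1, hθ2, inner_R2, inner_R2]
      simp only [hf1, hf2, v2, PiLp.toLp_apply, Matrix.cons_val_zero, Matrix.cons_val_one, Matrix.head_cons]
      ring]
    exact cos2 _
  have hkey : 6*((ξ 0^2 + ξ 1^2)*h^2) + A^2 ≤ 9 := by
    rw [hAsq, c1, c2, c3]
    nlinarith [q1, q2, q3, hr3, sq_nonneg (h * ξ 0), sq_nonneg (h * ξ 1)]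
  rw [EhexM, norm_sq_R2, le_div_iff₀ (by positivity), ← hA]
  nlinarith [sq_nonneg (3 - A)]

/-- Lemma `lem-hex-ellipticity`: for `μ ∈ ℂ∖ℝ` there is `C > 0` with
`|(E^tr_0(ξ)−μ)⁻¹| ≤ C⟨ξ⟩⁻²` and `|(E^hex_−(ξ)−μ)⁻¹| ≤ C⟨ξ⟩⁻²` on `Ω_h`. -/
theorem hexagonal_symbol_resolvent_bounds (μ : ℂ) (hμ : μ.im ≠ 0) :
    ∃ C > (0 : ℝ), ∀ h : ℝ, 0 < h → ∀ ξ ∈ Omegah h,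
      ‖(((Etr h ξ : ℝ) : ℂ) - μ)⁻¹‖ ≤ C * (1 + ‖ξ‖ ^ 2)⁻¹ ∧
      ‖(((EhexM h ξ : ℝ) : ℂ) - μ)⁻¹‖ ≤ C * (1 + ‖ξ‖ ^ 2)⁻¹ := by
  obtain ⟨C, hC, hbound⟩ := resolvent_bound μ hμ
  refine ⟨C, hC, fun h hh ξ hξ => ⟨?_, ?_⟩⟩
  · exact hbound (Etr h ξ) (‖ξ‖^2) (by positivity) (etr_ge hh hξ)
  · exact hbound (EhexM h ξ) (‖ξ‖^2) (by positivity) (ehex_ge hh hξ)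

end
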